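/- Let 0 < r ≤ 1/√2 and β ∈ (0, π), set d = 1 − 2r²(1−r²)(1+cos β), and let φ ∈ ℝ satisfy sin φ = sin β·(1−2r²)/d and cos φ = −(4r²(r²−1) + cos β·(1+(1−2r²)²))/(2d). Then the (2,3) entry of the product R_L(φ)·R_R(π−β)·R_L(φ) equals √(1−r²)·(4r²−1) sin β, which is the (2,3) entry of R_L(π)·R_R(π+β)·R_L(π). -/

import Mathlib

open Real

noncomputable def OmegaL (r : ℝ) : Matrix (Fin 3) (Fin 3) ℝ :=
  !![0, -r, 0; r, 0, -Real.sqrt (1 - r ^ 2); 0, Real.sqrt (1 - r ^ 2), 0]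

noncomputable def OmegaR (r : ℝ) : Matrix (Fin 3) (Fin 3) ℝ :=
  !![0, -r, 0; r, 0, Real.sqrt (1 - r ^ 2); 0, -Real.sqrt (1 - r ^ 2), 0]

noncomputable def OmegaG : Matrix (Fin 3) (Fin 3) ℝ :=
  !![0, -1, 0; 1, 0, 0; 0, 0, 0]

/-- Rotation matrix of a left turn of radius `r` and arc angle `φ`. -/
noncomputable def RL (r φ : ℝ) : Matrix (Fin 3) (Fin 3) ℝ := NormedSpace.exp (φ • OmegaL r)

/-- Rotation matrix of a right turn of radius `r` and arc angle `φ`. -/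
noncomputable def RR (r φ : ℝ) : Matrix (Fin 3) (Fin 3) ℝ := NormedSpace.exp (φ • OmegaR r)

/-- Rotation matrix of a great-circle arc of angle `φ`. -/
noncomputable def RG (φ : ℝ) : Matrix (Fin 3) (Fin 3) ℝ := NormedSpace.exp (φ • OmegaG)

attribute [local instance] Matrix.linftyOpNormedAddCommGroup Matrix.linftyOpNormedRing
  Matrix.linftyOpNormedAlgebra

lemma exp_cube (A : Matrix (Fin 3) (Fin 3) ℝ) (hA : A * A * A = -A) (φ : ℝ) :
    NormedSpace.exp (φ • A) = 1 + Real.sin φ • A + (1 - Real.cos φ) • (A * A) := by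
  set F : ℝ → Matrix (Fin 3) (Fin 3) ℝ :=
    fun t => 1 + Real.sin t • A + (1 - Real.cos t) • (A * A) with hF
  have hconst : ∀ t : ℝ, NormedSpace.exp (t • (-A)) * F t = 1 := by
    have hH : ∀ t : ℝ, HasDerivAt (fun u => NormedSpace.exp (u • (-A)) * F u) 0 t := by
      intro t
      have h1 : HasDerivAt (fun u : ℝ => NormedSpace.exp (u • (-A)))
          (NormedSpace.exp (t • (-A)) * (-A)) t := hasDerivAt_exp_smul_const (-A) t
      have h2 : HasDerivAt F (Real.cos t • A + Real.sin t • (A * A)) t := by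
        have hs : HasDerivAt (fun u => Real.sin u • A) (Real.cos t • A) t :=
          (Real.hasDerivAt_sin t).smul_const A
        have hc : HasDerivAt (fun u => (1 - Real.cos u) • (A * A))
            (Real.sin t • (A * A)) t := by
          have := ((hasDerivAt_const t (1:ℝ)).sub (Real.hasDerivAt_cos t)).smul_const (A * A)
          exact this.congr_deriv (by simp)
        exact (((hasDerivAt_const t (1 : Matrix (Fin 3) (Fin 3) ℝ)).add hs).add hc).congr_deriv (by simp)
      have := h1.mul h2
      refine this.congr_deriv ?_
      have key : A * F t = Real.cos t • A + Real.sin t • (A * A) := by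
        simp only [hF, mul_add, mul_one, mul_smul_comm, ← mul_assoc, hA]
        module
      rw [← key]
      simp [mul_assoc, mul_neg, neg_mul]
    have hd : ∀ t : ℝ, deriv (fun u => NormedSpace.exp (u • (-A)) * F u) t = 0 :=
      fun t => (hH t).deriv
    intro t
    have := is_const_of_deriv_eq_zero (fun u => (hH u).differentiableAt) hd t 0
    simpa [hF, NormedSpace.exp_zero] using this
  show NormedSpace.exp (φ • A) = F φ
  have hcomm : Commute (φ • A) (φ • (-A)) := by
    simp [Commute, SemiconjBy, smul_neg, mul_smul_comm, smul_mul_assoc]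
  have hinv : NormedSpace.exp (φ • A) * NormedSpace.exp (φ • (-A)) = 1 := by
    refine (NormedSpace.exp_add_of_commute hcomm).symm.trans ?_
    simp [smul_neg, NormedSpace.exp_zero]
  calc NormedSpace.exp (φ • A)
      = NormedSpace.exp (φ • A) * (NormedSpace.exp (φ • (-A)) * F φ) := by
        rw [hconst φ, mul_one]
    _ = F φ := by rw [← mul_assoc, hinv, one_mul]

lemma RL_eq (r : ℝ) (hq : (Real.sqrt (1 - r ^ 2)) ^ 2 = 1 - r ^ 2) (φ : ℝ) :
    RL r φ = !![1 - (1 - Real.cos φ) * r ^ 2, -(Real.sin φ * r),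
        (1 - Real.cos φ) * (r * Real.sqrt (1 - r ^ 2));
      Real.sin φ * r, Real.cos φ, -(Real.sin φ * Real.sqrt (1 - r ^ 2));
      (1 - Real.cos φ) * (r * Real.sqrt (1 - r ^ 2)), Real.sin φ * Real.sqrt (1 - r ^ 2),
        1 - (1 - Real.cos φ) * (1 - r ^ 2)] := by
  have hA : OmegaL r * OmegaL r * OmegaL r = -(OmegaL r) := by
    ext i j
    fin_cases i <;> fin_cases j <;>
      simp [OmegaL, Matrix.mul_apply, Fin.sum_univ_three] <;>
      (first
      | ring1
      | exact Or.inl (mul_comm _ _)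
      | exact Or.inl rfl
      | linear_combination r * hq
      | linear_combination (-r) * hq
      | linear_combination Real.sqrt (1 - r ^ 2) * hq
      | linear_combination (-Real.sqrt (1 - r ^ 2)) * hq
      | linear_combination (1 - Real.cos φ) * hq
      | linear_combination (Real.cos φ - 1) * hq)
  rw [RL, exp_cube _ hA]
  ext i j
  fin_cases i <;> fin_cases j <;>
    simp [OmegaL, Matrix.mul_apply, Fin.sum_univ_three] <;>
    (first
      | ring1
      | exact Or.inl (mul_comm _ _)
      | exact Or.inl rfl
      | linear_combination r * hq
      | linear_combination (-r) * hq
      | linear_combination Real.sqrt (1 - r ^ 2) * hq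
      | linear_combination (-Real.sqrt (1 - r ^ 2)) * hq
      | linear_combination (1 - Real.cos φ) * hq
      | linear_combination (Real.cos φ - 1) * hq)

lemma RR_eq (r : ℝ) (hq : (Real.sqrt (1 - r ^ 2)) ^ 2 = 1 - r ^ 2) (φ : ℝ) :
    RR r φ = !![1 - (1 - Real.cos φ) * r ^ 2, -(Real.sin φ * r),
        -((1 - Real.cos φ) * (r * Real.sqrt (1 - r ^ 2)));
      Real.sin φ * r, Real.cos φ, Real.sin φ * Real.sqrt (1 - r ^ 2);
      -((1 - Real.cos φ) * (r * Real.sqrt (1 - r ^ 2))), -(Real.sin φ * Real.sqrt (1 - r ^ 2)),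
        1 - (1 - Real.cos φ) * (1 - r ^ 2)] := by
  have hA : OmegaR r * OmegaR r * OmegaR r = -(OmegaR r) := by
    ext i j
    fin_cases i <;> fin_cases j <;>
      simp [OmegaR, Matrix.mul_apply, Fin.sum_univ_three] <;>
      (first
      | ring1
      | exact Or.inl (mul_comm _ _)
      | exact Or.inl rfl
      | linear_combination r * hq
      | linear_combination (-r) * hq
      | linear_combination Real.sqrt (1 - r ^ 2) * hq
      | linear_combination (-Real.sqrt (1 - r ^ 2)) * hq
      | linear_combination (1 - Real.cos φ) * hq
      | linear_combination (Real.cos φ - 1) * hq)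
  rw [RR, exp_cube _ hA]
  ext i j
  fin_cases i <;> fin_cases j <;>
    simp [OmegaR, Matrix.mul_apply, Fin.sum_univ_three] <;>
    (first
      | ring1
      | exact Or.inl (mul_comm _ _)
      | exact Or.inl rfl
      | linear_combination r * hq
      | linear_combination (-r) * hq
      | linear_combination Real.sqrt (1 - r ^ 2) * hq
      | linear_combination (-Real.sqrt (1 - r ^ 2)) * hq
      | linear_combination (1 - Real.cos φ) * hq
      | linear_combination (Real.cos φ - 1) * hq)

set_option maxHeartbeats 2000000 in
theorem stmt_16 (r β φ : ℝ) (hr : 0 < r) (hr' : r ≤ 1 / Real.sqrt 2)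
    (hβ : β ∈ Set.Ioo (0 : ℝ) Real.pi)
    (hsin : Real.sin φ =
      Real.sin β * (1 - 2 * r ^ 2) / (1 - 2 * r ^ 2 * (1 - r ^ 2) * (1 + Real.cos β)))
    (hcos : Real.cos φ =
      -((4 * r ^ 2 * (r ^ 2 - 1) + Real.cos β * (1 + (1 - 2 * r ^ 2) ^ 2)) /
        (2 * (1 - 2 * r ^ 2 * (1 - r ^ 2) * (1 + Real.cos β))))) :
    (RL r φ * RR r (Real.pi - β) * RL r φ) 1 2 =
      Real.sqrt (1 - r ^ 2) * (4 * r ^ 2 - 1) * Real.sin β ∧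
    (RL r Real.pi * RR r (Real.pi + β) * RL r Real.pi) 1 2 =
      Real.sqrt (1 - r ^ 2) * (4 * r ^ 2 - 1) * Real.sin β := by
  have h2 : ((1:ℝ) / Real.sqrt 2) ^ 2 = 1 / 2 := by
    rw [div_pow, one_pow, Real.sq_sqrt] <;> norm_num
  have hrhalf : r ^ 2 ≤ 1 / 2 := by nlinarith [Real.sqrt_pos.mpr (by norm_num : (0:ℝ) < 2)]
  have hq : Real.sqrt (1 - r ^ 2) ^ 2 = 1 - r ^ 2 := Real.sq_sqrt (by nlinarith)
  have hcb1 : Real.cos β < 1 := by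
    have := Real.cos_lt_cos_of_nonneg_of_le_pi (le_refl 0) hβ.2.le hβ.1
    simpa using this
  have hcb2 : -1 ≤ Real.cos β := Real.neg_one_le_cos β
  have hd : 0 < 1 - 2 * r ^ 2 * (1 - r ^ 2) * (1 + Real.cos β) := by
    nlinarith [mul_nonneg (by linarith : (0:ℝ) ≤ 1 + Real.cos β) (sq_nonneg (2 * r ^ 2 - 1))]
  have hd' : (1 - 2 * r ^ 2 * (1 - r ^ 2) * (1 + Real.cos β)) ≠ 0 := ne_of_gt hd
  have hpy := Real.sin_sq_add_cos_sq β
  have hs' : Real.sin φ * (1 - 2 * r ^ 2 * (1 - r ^ 2) * (1 + Real.cos β)) =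
      Real.sin β * (1 - 2 * r ^ 2) := by
    rw [hsin]; field_simp
  have hc' : Real.cos φ * (2 * (1 - 2 * r ^ 2 * (1 - r ^ 2) * (1 + Real.cos β))) =
      -(4 * r ^ 2 * (r ^ 2 - 1) + Real.cos β * (1 + (1 - 2 * r ^ 2) ^ 2)) := by
    rw [hcos, neg_mul, div_mul_cancel₀ _ (mul_ne_zero two_ne_zero hd')]
  constructor
  · rw [RL_eq r hq, RR_eq r hq]
    have h1 : Real.pi - β = -β + Real.pi := by ring
    simp only [Matrix.mul_apply, Fin.sum_univ_three, h1, Real.sin_add_pi, Real.cos_add_pi,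
      Real.sin_neg, Real.cos_neg, Matrix.cons_val', Matrix.cons_val_zero, Matrix.cons_val_one,
      Matrix.head_cons, Matrix.empty_val', Matrix.cons_val_fin_one, Matrix.head_fin_const,
      Matrix.cons_val_two, Matrix.tail_cons, Matrix.of_apply]
    apply mul_left_cancel₀ (pow_ne_zero 2 hd')
    linear_combination (norm := ring1)
      ((2 : ℝ) * Real.sqrt (1 - r ^ 2) * Real.cos β * Real.cos φ + (-1 : ℝ) * Real.sqrt (1 - r ^ 2) ^ 3 * Real.sin β * Real.sin φ + (-1 : ℝ) * Real.sqrt (1 - r ^ 2) ^ 3 * Real.sin β ^ 2 + r ^ 2 * Real.sqrt (1 - r ^ 2) + (-3 : ℝ) * r ^ 2 * Real.sqrt (1 - r ^ 2) * Real.cos φ + r ^ 2 * Real.sqrt (1 - r ^ 2) * Real.cos β + (-7 : ℝ) * r ^ 2 * Real.sqrt (1 - r ^ 2) * Real.cos β * Real.cos φ + (-4 : ℝ) * r ^ 2 * Real.sqrt (1 - r ^ 2) * Real.cos β ^ 2 * Real.cos φ + r ^ 2 * Real.sqrt (1 - r ^ 2) * Real.sin β * Real.sin φ + r ^ 2 *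 Real.sqrt (1 - r ^ 2) * Real.sin β ^ 2 + r ^ 2 * Real.sqrt (1 - r ^ 2) ^ 3 + (-1 : ℝ) * r ^ 2 * Real.sqrt (1 - r ^ 2) ^ 3 * Real.cos φ + r ^ 2 * Real.sqrt (1 - r ^ 2) ^ 3 * Real.cos β + (-1 : ℝ) * r ^ 2 * Real.sqrt (1 - r ^ 2) ^ 3 * Real.cos β * Real.cos φ + (2 : ℝ) * r ^ 2 * Real.sqrt (1 - r ^ 2) ^ 3 * Real.sin β * Real.sin φ + (2 : ℝ) * r ^ 2 * Real.sqrt (1 - r ^ 2) ^ 3 * Real.sin β * Real.cos β * Real.sin φ + (2 : ℝ) * r ^ 2 * Real.sqrt (1 - r ^ 2) ^ 3 * Real.sin β ^ 2 + (-5 : ℝ) * r ^ 4 * Real.sqrt (1 - r ^ 2) + (9 : ℝ) * r ^ 4 * Real.sqrt (1 - r ^ 2) * Real.cos φ + (-7 : ℝ) * r ^ 4 * Real.sqrt (1 - r ^ 2) * Real.cos β + (19 : ℝ) * r ^ 4 * Real.sqrt (1 - r ^ 2) * Real.cos β * Real.cos φ + (-2 : ℝ) * r ^ 4 * Real.sqrt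 (1 - r ^ 2) * Real.cos β ^ 2 + (10 : ℝ) * r ^ 4 * Real.sqrt (1 - r ^ 2) * Real.cos β ^ 2 * Real.cos φ + (-2 : ℝ) * r ^ 4 * Real.sqrt (1 - r ^ 2) * Real.sin β * Real.sin φ + (-2 : ℝ) * r ^ 4 * Real.sqrt (1 - r ^ 2) * Real.sin β * Real.cos β * Real.sin φ + (-2 : ℝ) * r ^ 4 * Real.sqrt (1 - r ^ 2) * Real.sin β ^ 2 + (-2 : ℝ) * r ^ 4 * Real.sqrt (1 - r ^ 2) ^ 3 + (2 : ℝ) * r ^ 4 * Real.sqrt (1 - r ^ 2) ^ 3 * Real.cos φ + (-4 : ℝ) * r ^ 4 * Real.sqrt (1 - r ^ 2) ^ 3 * Real.cos β + (4 : ℝ) * r ^ 4 * Real.sqrt (1 - r ^ 2) ^ 3 * Real.cos β * Real.cos φ + (-2 : ℝ) * r ^ 4 * Real.sqrt (1 - r ^ 2) ^ 3 * Real.cos β ^ 2 + (2 : ℝ) * r ^ 4 * Real.sqrt (1 - r ^ 2) ^ 3 * Real.cos β ^ 2 * Real.cos φ + (-2 : ℝ) * r ^ 4 * Real.sqrt (1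 - r ^ 2) ^ 3 * Real.sin β * Real.sin φ + (-2 : ℝ) * r ^ 4 * Real.sqrt (1 - r ^ 2) ^ 3 * Real.sin β * Real.cos β * Real.sin φ + (8 : ℝ) * r ^ 6 * Real.sqrt (1 - r ^ 2) + (-12 : ℝ) * r ^ 6 * Real.sqrt (1 - r ^ 2) * Real.cos φ + (16 : ℝ) * r ^ 6 * Real.sqrt (1 - r ^ 2) * Real.cos β + (-24 : ℝ) * r ^ 6 * Real.sqrt (1 - r ^ 2) * Real.cos β * Real.cos φ + (8 : ℝ) * r ^ 6 * Real.sqrt (1 - r ^ 2) * Real.cos β ^ 2 + (-12 : ℝ) * r ^ 6 * Real.sqrt (1 - r ^ 2) * Real.cos β ^ 2 * Real.cos φ + (2 : ℝ) * r ^ 6 * Real.sqrt (1 - r ^ 2) * Real.sin β * Real.sin φ + (2 : ℝ) * r ^ 6 * Real.sqrt (1 - r ^ 2) * Real.sin β * Real.cos β * Real.sin φ + (2 : ℝ) * r ^ 6 * Real.sqrt (1 - r ^ 2) ^ 3 + (-2 : ℝ) * r ^ 6 * Real.sqrt (1 - r ^ 2) ^ 3 * Real.cos φ + (4 : ℝ)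 * r ^ 6 * Real.sqrt (1 - r ^ 2) ^ 3 * Real.cos β + (-4 : ℝ) * r ^ 6 * Real.sqrt (1 - r ^ 2) ^ 3 * Real.cos β * Real.cos φ + (2 : ℝ) * r ^ 6 * Real.sqrt (1 - r ^ 2) ^ 3 * Real.cos β ^ 2 + (-2 : ℝ) * r ^ 6 * Real.sqrt (1 - r ^ 2) ^ 3 * Real.cos β ^ 2 * Real.cos φ + (-6 : ℝ) * r ^ 8 * Real.sqrt (1 - r ^ 2) + (6 : ℝ) * r ^ 8 * Real.sqrt (1 - r ^ 2) * Real.cos φ + (-12 : ℝ) * r ^ 8 * Real.sqrt (1 - r ^ 2) * Real.cos β + (12 : ℝ) * r ^ 8 * Real.sqrt (1 - r ^ 2) * Real.cos β * Real.cos φ + (-6 : ℝ) * r ^ 8 * Real.sqrt (1 - r ^ 2) * Real.cos β ^ 2 + (6 : ℝ) * r ^ 8 * Real.sqrt (1 - r ^ 2) * Real.cos β ^ 2 * Real.cos φ) * hs' +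
      ((1/2 : ℝ) * Real.sqrt (1 - r ^ 2) * Real.sin β * Real.cos φ + (1/2 : ℝ) * Real.sqrt (1 - r ^ 2) * Real.sin β * Real.cos β + (1/2 : ℝ) * r ^ 2 * Real.sqrt (1 - r ^ 2) * Real.sin β + (-2 : ℝ) * r ^ 2 * Real.sqrt (1 - r ^ 2) * Real.sin β * Real.cos φ + (-3/2 : ℝ) * r ^ 2 * Real.sqrt (1 - r ^ 2) * Real.sin β * Real.cos β + (-1 : ℝ) * r ^ 2 * Real.sqrt (1 - r ^ 2) * Real.sin β * Real.cos β * Real.cos φ + (-1/2 : ℝ) * r ^ 2 * Real.sqrt (1 - r ^ 2) ^ 3 * Real.sin β + (-1/2 : ℝ) * r ^ 2 * Real.sqrt (1 - r ^ 2) ^ 3 * Real.sin β * Real.cos β + (-1/2 : ℝ) * r ^ 4 * Real.sqrt (1 - r ^ 2) * Real.sin β + (3 : ℝ) * r ^ 4 * Real.sqrt (1 - r ^ 2) * Real.sin β * Real.cos φ + (-1/2 : ℝ) * r ^ 4 * Real.sqrt (1 - r ^ 2) * Real.sin β * Real.cos β + (3 : ℝ) * r ^ 4 * Real.sqrt (1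 - r ^ 2) * Real.sin β * Real.cos β * Real.cos φ + r ^ 4 * Real.sqrt (1 - r ^ 2) ^ 3 * Real.sin β + r ^ 4 * Real.sqrt (1 - r ^ 2) ^ 3 * Real.sin β * Real.cos β + r ^ 6 * Real.sqrt (1 - r ^ 2) * Real.sin β + (-2 : ℝ) * r ^ 6 * Real.sqrt (1 - r ^ 2) * Real.sin β * Real.cos φ + r ^ 6 * Real.sqrt (1 - r ^ 2) * Real.sin β * Real.cos β + (-2 : ℝ) * r ^ 6 * Real.sqrt (1 - r ^ 2) * Real.sin β * Real.cos β * Real.cos φ) * hc' +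
      ((-1 : ℝ) * Real.sqrt (1 - r ^ 2) * Real.sin β ^ 3 + r ^ 2 * Real.sqrt (1 - r ^ 2) * Real.sin β + (2 : ℝ) * r ^ 2 * Real.sqrt (1 - r ^ 2) * Real.sin β * Real.cos β + r ^ 2 * Real.sqrt (1 - r ^ 2) * Real.sin β * Real.cos β ^ 2 + (4 : ℝ) * r ^ 2 * Real.sqrt (1 - r ^ 2) * Real.sin β ^ 3 + (-6 : ℝ) * r ^ 4 * Real.sqrt (1 - r ^ 2) * Real.sin β + (-12 : ℝ) * r ^ 4 * Real.sqrt (1 - r ^ 2) * Real.sin β * Real.cos β + (-6 : ℝ) * r ^ 4 * Real.sqrt (1 - r ^ 2) * Real.sin β * Real.cos β ^ 2 + (-4 : ℝ) * r ^ 4 * Real.sqrt (1 - r ^ 2) * Real.sin β ^ 3 + (12 : ℝ) * r ^ 6 * Real.sqrt (1 - r ^ 2) * Real.sin β + (24 : ℝ) * r ^ 6 * Real.sqrt (1 - r ^ 2) * Real.sin β * Real.cos β + (12 : ℝ) * r ^ 6 * Real.sqrt (1 - r ^ 2) * Real.sin β * Real.cos β ^ 2 + (-8 : ℝ) * r ^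 8 * Real.sqrt (1 - r ^ 2) * Real.sin β + (-16 : ℝ) * r ^ 8 * Real.sqrt (1 - r ^ 2) * Real.sin β * Real.cos β + (-8 : ℝ) * r ^ 8 * Real.sqrt (1 - r ^ 2) * Real.sin β * Real.cos β ^ 2) * hq +
      ((-1 : ℝ) * Real.sqrt (1 - r ^ 2) * Real.sin β + (6 : ℝ) * r ^ 2 * Real.sqrt (1 - r ^ 2) * Real.sin β + (-12 : ℝ) * r ^ 4 * Real.sqrt (1 - r ^ 2) * Real.sin β + (8 : ℝ) * r ^ 6 * Real.sqrt (1 - r ^ 2) * Real.sin β) * hpy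
  · rw [RL_eq r hq, RR_eq r hq]
    have h1 : Real.pi + β = β + Real.pi := by ring
    simp only [Matrix.mul_apply, Fin.sum_univ_three, h1, Real.sin_add_pi, Real.cos_add_pi,
      Real.sin_pi, Real.cos_pi, Matrix.cons_val', Matrix.cons_val_zero, Matrix.cons_val_one,
      Matrix.head_cons, Matrix.empty_val', Matrix.cons_val_fin_one, Matrix.head_fin_const,
      Matrix.cons_val_two, Matrix.tail_cons, Matrix.of_apply]
    ring1
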